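/- Let Ŵ^off = {(w_0,…,w_t) ∈ 𝕎^{t+1} : [H]_i Σ_{l=0}^{t} A_cl^{t-l} w_l ≤ γ} with P((w_0,…,w_t) ∈ Ŵ^off) ≥ 1 - α for the random disturbance sequence. If the inputs v_0,…,v_t satisfy [H]_i (A_cl^{t+1} x_0 + Σ_{l=0}^{t} A_cl^{t-l} B v_l) ≤ h_i - γ, then the closed-loop state x_{t+1} = A_cl^{t+1} x_0 + Σ_{l=0}^{t} A_cl^{t-l}(B v_l + w_l) satisfies P([H]_i x_{t+1} ≤ h_i) ≥ 1 - α. -/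
import Mathlib


open MeasureTheory Matrix Finset

theorem offline_robustness_implies_chance_constraint
    {Ω : Type*} [MeasurableSpace Ω] (μ : Measure Ω) [IsProbabilityMeasure μ]
    (n m : ℕ) (Acl : Matrix (Fin n) (Fin n) ℝ) (B : Matrix (Fin n) (Fin m) ℝ)
    (Hi : Fin n → ℝ) (hi γ α : ℝ) (hα : 0 < α) (hα1 : α < 1)
    (Wset : Set (Fin n → ℝ)) (t : ℕ)
    (w : ℕ → Ω → (Fin n → ℝ)) (hsupp : ∀ l ω, w l ω ∈ Wset)
    (hoff : μ {ω | Hi ⬝ᵥ (∑ l ∈ Finset.range (t + 1),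
        (Acl ^ (t - l)).mulVec (w l ω)) ≤ γ} ≥ 1 - ENNReal.ofReal α)
    (x0 : Fin n → ℝ) (v : ℕ → (Fin m → ℝ))
    (hrobust : Hi ⬝ᵥ ((Acl ^ (t + 1)).mulVec x0
        + ∑ l ∈ Finset.range (t + 1), (Acl ^ (t - l)).mulVec (B.mulVec (v l)))
      ≤ hi - γ) :
    μ {ω | Hi ⬝ᵥ ((Acl ^ (t + 1)).mulVec x0
        + ∑ l ∈ Finset.range (t + 1),
            (Acl ^ (t - l)).mulVec (B.mulVec (v l) + w l ω)) ≤ hi}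
      ≥ 1 - ENNReal.ofReal α := by
  refine le_trans hoff (measure_mono ?_)
  intro ω hω
  simp only [Set.mem_setOf_eq] at *
  have key : Hi ⬝ᵥ ((Acl ^ (t + 1)).mulVec x0
      + ∑ l ∈ Finset.range (t + 1),
          (Acl ^ (t - l)).mulVec (B.mulVec (v l) + w l ω))
      = (Hi ⬝ᵥ ((Acl ^ (t + 1)).mulVec x0
        + ∑ l ∈ Finset.range (t + 1), (Acl ^ (t - l)).mulVec (B.mulVec (v l))))
      + Hi ⬝ᵥ (∑ l ∈ Finset.range (t + 1), (Acl ^ (t - l)).mulVec (w l ω)) := by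
    simp only [mulVec_add, Finset.sum_add_distrib, ← dotProduct_add]
    ring_nf
  rw [key]
  linarith
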